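/- Under the same hypotheses (F with right endpoint M, left derivative F'(M-) > 0, L(n) → F'(M-)) and for positive scalings aₙ with aₙ → 0 and aₙ·n → ∞: for every closed set C ⊂ (-∞, 0] not containing 0, limsup_{n→∞} aₙ log P( aₙ n L(n)(Zₙ - M) ∈ C ) ≤ sup C, where sup C < 0. -/

import Mathlib

open MeasureTheory Set Filter Topology

/-- `maxFirst W n ω = max {W 0 ω, …, W (n-1) ω}` for `n ≥ 1` (junk value `W 0 ω` for `n = 0`). -/
noncomputable def maxFirst {Ω : Type*} (W : ℕ → Ω → ℝ) : ℕ → Ω → ℝ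
  | 0, ω => W 0 ω
  | n + 1, ω => max (maxFirst W n ω) (W n ω)

lemma maxFirst_le_iff {Ω : Type*} (W : ℕ → Ω → ℝ) (n : ℕ) (hn : 1 ≤ n) (ω : Ω) (y : ℝ) :
    maxFirst W n ω ≤ y ↔ ∀ i < n, W i ω ≤ y := by
  induction n with
  | zero => omega
  | succ m ih =>
    rcases Nat.eq_zero_or_pos m with h0 | hm
    · subst h0
      simp [maxFirst, Nat.lt_one_iff]
    · have hrw : maxFirst W (m + 1) ω = max (maxFirst W m ω) (W m ω) := rfl
      rw [hrw, max_le_iff, ih hm]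
      constructor
      · rintro ⟨h1, h2⟩ i hi
        rcases Nat.lt_succ_iff_lt_or_eq.1 hi with h | h
        · exact h1 i h
        · exact h ▸ h2
      · exact fun h => ⟨fun i hi => h i (hi.trans m.lt_succ_self), h m m.lt_succ_self⟩

theorem stmt_7 {Ω : Type*} [MeasurableSpace Ω] (P : Measure Ω) [IsProbabilityMeasure P]
    (W : ℕ → Ω → ℝ) (μ : Measure ℝ) [IsProbabilityMeasure μ]
    (hmeas : ∀ i, Measurable (W i))
    (hindep : ProbabilityTheory.iIndepFun W P)
    (hdist : ∀ i, Measure.map (W i) P = μ)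
    (M : ℝ) (F : ℝ → ℝ) (hF : ∀ x, F x = (μ (Iic x)).toReal) (hFM : F M = 1)
    (d : ℝ) (hd : 0 < d) (hderiv : HasDerivWithinAt F d (Iio M) M)
    (L : ℕ → ℝ) (hL : Tendsto L atTop (nhds d))
    (a : ℕ → ℝ) (ha_pos : ∀ n, 0 < a n) (ha0 : Tendsto a atTop (nhds 0))
    (han : Tendsto (fun n : ℕ => a n * n) atTop atTop)
    (C : Set ℝ) (hC_closed : IsClosed C) (hC_sub : C ⊆ Iic 0) (hC0 : (0 : ℝ) ∉ C)
    (hC_ne : C.Nonempty) :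
    limsup (fun n : ℕ =>
        ((a n : ℝ) : EReal) *
          ENNReal.log (P {ω | a n * n * L n * (maxFirst W n ω - M) ∈ C})) atTop ≤
        ((sSup C : ℝ) : EReal) ∧
      sSup C < 0 := by
  have hbdd : BddAbove C := ⟨0, fun y hy => hC_sub hy⟩
  have hsC : sSup C ∈ C := hC_closed.csSup_mem hC_ne hbdd
  have hs0 : sSup C ≤ 0 := hC_sub hsC
  have hs : sSup C < 0 := lt_of_le_of_ne hs0 fun h => hC0 (h ▸ hsC)
  refine ⟨?_, hs⟩
  set s := sSup C with hsdef
  set t : ℕ → ℝ := fun n => a n * n * L n with htdef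
  have ht : Tendsto t atTop atTop := Filter.Tendsto.atTop_mul_pos hd han hL
  have ht0 : ∀ᶠ n in atTop, 0 < t n := ht.eventually_gt_atTop 0
  set u : ℕ → ℝ := fun n => s / t n with hudef
  have hu : Tendsto u atTop (𝓝 0) := tendsto_const_nhds.div_atTop ht
  set x : ℕ → ℝ := fun n => M + u n with hxdef
  have hu_neg : ∀ᶠ n in atTop, u n < 0 := ht0.mono fun n hn => div_neg_of_neg_of_pos hs hn
  have hx_lt : ∀ᶠ n in atTop, x n < M := hu_neg.mono fun n hn => by
    simp only [hxdef]; linarith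
  have hx_tendsto : Tendsto x atTop (𝓝[Iio M] M) := by
    rw [tendsto_nhdsWithin_iff]
    constructor
    · have : Tendsto x atTop (𝓝 (M + 0)) := tendsto_const_nhds.add hu
      simpa using this
    · exact hx_lt.mono fun n hn => hn
  have hslope : Tendsto (fun n => slope F M (x n)) atTop (𝓝 d) := by
    have h1 : Tendsto (slope F M) (𝓝[Iio M \ {M}] M) (𝓝 d) :=
      hasDerivWithinAt_iff_tendsto_slope.1 hderiv
    rw [diff_singleton_eq_self notMem_Iio_self] at h1
    exact h1.comp hx_tendsto
  set v : ℕ → ℝ := fun n => F (x n) - 1 with hvdef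
  have hveq : ∀ᶠ n in atTop, v n = u n * slope F M (x n) := by
    filter_upwards [hu_neg] with n hn
    have hune : u n ≠ 0 := ne_of_lt hn
    have hx_sub : x n - M = u n := by simp [hxdef]
    rw [slope_def_field, hFM, hx_sub, hvdef]
    field_simp
  have hv0 : Tendsto v atTop (𝓝 0) := by
    have h1 : Tendsto (fun n => u n * slope F M (x n)) atTop (𝓝 (0 * d)) := hu.mul hslope
    rw [zero_mul] at h1
    exact h1.congr' (hveq.mono fun n h => h.symm)
  have hslope_pos : ∀ᶠ n in atTop, 0 < slope F M (x n) := hslope.eventually (eventually_gt_nhds hd)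
  have hv_neg : ∀ᶠ n in atTop, v n < 0 := by
    filter_upwards [hveq, hu_neg, hslope_pos] with n heq hun hsl
    rw [heq]; exact mul_neg_of_neg_of_pos hun hsl
  have hF_pos : ∀ᶠ n in atTop, 0 < F (x n) := by
    have h1 : ∀ᶠ n in atTop, -(1/2 : ℝ) < v n :=
      hv0.eventually (eventually_gt_nhds (by norm_num))
    filter_upwards [h1] with n hn
    have h2 : F (x n) = 1 + v n := by simp [hvdef]
    rw [h2]; linarith
  have hq : Tendsto (fun n => Real.log (1 + v n) / v n) atTop (𝓝 1) := by
    have hlog : HasDerivAt (fun y : ℝ => Real.log (1 + y)) 1 0 := by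
      have h1 : HasDerivAt (fun y : ℝ => 1 + y) 1 0 := by
        simpa using (hasDerivAt_id (0 : ℝ)).const_add 1
      have h2 : HasDerivAt Real.log 1 (1 + 0 : ℝ) := by
        simpa using Real.hasDerivAt_log (by norm_num : (1 + 0 : ℝ) ≠ 0)
      have h21 := h2.comp 0 h1
      rwa [mul_one] at h21
    have h3 : Tendsto (slope (fun y => Real.log (1 + y)) 0) (𝓝[≠] 0) (𝓝 1) :=
      hasDerivAt_iff_tendsto_slope.1 hlog
    have hv_ne : Tendsto v atTop (𝓝[≠] 0) := by
      rw [tendsto_nhdsWithin_iff]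
      exact ⟨hv0, hv_neg.mono fun n hn => ne_of_lt hn⟩
    have h4 := h3.comp hv_ne
    refine h4.congr fun n => ?_
    simp [Function.comp, slope_def_field]
  have hr : Tendsto (fun n => a n * n * u n) atTop (𝓝 (s / d)) := by
    have h1 : Tendsto (fun n => s / L n) atTop (𝓝 (s / d)) := tendsto_const_nhds.div hL hd.ne'
    refine h1.congr' ?_
    have hL_pos : ∀ᶠ n in atTop, 0 < L n := hL.eventually (eventually_gt_nhds hd)
    filter_upwards [hL_pos, eventually_ge_atTop 1] with n h1 h2
    have hn0 : (0 : ℝ) < n := by exact_mod_cast h2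
    have ha' := ha_pos n
    simp only [hudef, htdef]
    field_simp
  have hg : Tendsto (fun n => a n * n * Real.log (F (x n))) atTop (𝓝 s) := by
    have h1 : Tendsto (fun n => (a n * n * u n) * slope F M (x n) * (Real.log (1 + v n) / v n))
        atTop (𝓝 (s / d * d * 1)) := (hr.mul hslope).mul hq
    have h2 : s / d * d * 1 = s := by field_simp
    rw [h2] at h1
    refine h1.congr' ?_
    filter_upwards [hveq, hv_neg] with n heq hvn
    have hv_ne : v n ≠ 0 := ne_of_lt hvn
    have h1v : 1 + v n = F (x n) := by simp [hvdef]
    calc a n * ↑n * u n * slope F M (x n) * (Real.log (1 + v n) / v n)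
        = a n * ↑n * (u n * slope F M (x n)) * (Real.log (F (x n)) / v n) := by
          rw [h1v]; ring
      _ = a n * ↑n * v n * (Real.log (F (x n)) / v n) := by rw [← heq]
      _ = a n * ↑n * Real.log (F (x n)) := by field_simp
  have hCs : C ⊆ Iic s := fun y hy => le_csSup hbdd hy
  have key : ∀ᶠ n in atTop,
      ((a n : ℝ) : EReal) * ENNReal.log (P {ω | a n * ↑n * L n * (maxFirst W n ω - M) ∈ C}) ≤
        ((a n * ↑n * Real.log (F (x n)) : ℝ) : EReal) := by
    filter_upwards [ht0, hF_pos, eventually_ge_atTop 1] with n htn hFn hn1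
    have hsub : {ω | a n * ↑n * L n * (maxFirst W n ω - M) ∈ C} ⊆
        {ω | maxFirst W n ω ≤ x n} := by
      intro ω hω
      have h1 : t n * (maxFirst W n ω - M) ≤ s := hCs hω
      have h2 : maxFirst W n ω - M ≤ s / t n := by
        rw [le_div_iff₀ htn, mul_comm]; exact h1
      show maxFirst W n ω ≤ x n
      simp only [hxdef, hudef]
      linarith
    have hP : P {ω | maxFirst W n ω ≤ x n} = μ (Iic (x n)) ^ n := by
      have hset : {ω | maxFirst W n ω ≤ x n} = ⋂ i ∈ Finset.range n, W i ⁻¹' Iic (x n) := by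
        ext ω
        simp only [mem_setOf_eq, Set.mem_iInter, mem_preimage, mem_Iic, Finset.mem_range]
        exact maxFirst_le_iff W n hn1 ω (x n)
      rw [hset, hindep.measure_inter_preimage_eq_mul (Finset.range n)
        (sets := fun _ => Iic (x n)) (fun i _ => measurableSet_Iic)]
      have hPi : ∀ i, P (W i ⁻¹' Iic (x n)) = μ (Iic (x n)) := fun i => by
        rw [← hdist i, Measure.map_apply (hmeas i) measurableSet_Iic]
      simp [hPi, Finset.prod_const, Finset.card_range]
    have hPle : P {ω | a n * ↑n * L n * (maxFirst W n ω - M) ∈ C} ≤ μ (Iic (x n)) ^ n :=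
      hP ▸ measure_mono hsub
    have hlogle : ENNReal.log (P {ω | a n * ↑n * L n * (maxFirst W n ω - M) ∈ C}) ≤
        (n : EReal) * ENNReal.log (μ (Iic (x n))) := by
      calc ENNReal.log (P {ω | a n * ↑n * L n * (maxFirst W n ω - M) ∈ C})
          ≤ ENNReal.log (μ (Iic (x n)) ^ n) := ENNReal.log_monotone hPle
        _ = (n : EReal) * ENNReal.log (μ (Iic (x n))) := ENNReal.log_pow
    have hμlog : ENNReal.log (μ (Iic (x n))) = ((Real.log (F (x n)) : ℝ) : EReal) := by
      rw [ENNReal.log_pos_real' (by rw [← hF]; exact hFn)]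
      rw [← hF]
    have ha_nonneg : (0 : EReal) ≤ ((a n : ℝ) : EReal) := by
      exact_mod_cast (ha_pos n).le
    refine le_trans (mul_le_mul_of_nonneg_left hlogle ha_nonneg) (le_of_eq ?_)
    rw [hμlog]
    rw [show ((n : ℕ) : EReal) = (((n : ℕ) : ℝ) : EReal) from (EReal.coe_coe_eq_natCast n).symm]
    rw [← EReal.coe_mul, ← EReal.coe_mul, mul_assoc]
  have hcoe : Tendsto (fun n => ((a n * ↑n * Real.log (F (x n)) : ℝ) : EReal)) atTop
      (𝓝 ((s : ℝ) : EReal)) := by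
    exact (continuous_coe_real_ereal.tendsto s).comp hg
  calc limsup (fun n : ℕ =>
        ((a n : ℝ) : EReal) *
          ENNReal.log (P {ω | a n * ↑n * L n * (maxFirst W n ω - M) ∈ C})) atTop
      ≤ limsup (fun n => ((a n * ↑n * Real.log (F (x n)) : ℝ) : EReal)) atTop :=
        limsup_le_limsup key
    _ = ((s : ℝ) : EReal) := hcoe.limsup_eq
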